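/- arXiv:math/9201251 — 2 statements merged into one kernel-verified Lean document; each statement's English description precedes it below -/
import Mathlib

section
/- Let a be a set of distinct regular cardinals each greater than |a|. Then pcf(a) contains at most 2^{|a|} cardinals, i.e., |pcf(a)| ≤ 2^{|a|}. -/
open Cardinal Ordinal

set_option linter.deprecated false
set_option maxHeartbeats 1000000

/-- The set of choice functions on a set `a` of cardinals: functions picking, for each
cardinal `λ ∈ a`, an ordinal below the initial ordinal of `λ`. -/
def ProdChoice (a : Set Cardinal.{0}) : Set (a → Ordinal.{0}) :=
  { f | ∀ i : a, f i < (i : Cardinal).ord }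

/-- The cofinality of the reduced product `∏ a / F`: the least cardinality of a family
`S` of choice functions such that every choice function is `≤` some member of `S` on a
set of indices belonging to `F` (this is the cofinality of the linearly ordered
ultraproduct `∏ a / F`). -/
noncomputable def cofUlt (a : Set Cardinal.{0}) (F : Ultrafilter a) : Cardinal.{1} :=
  sInf { c : Cardinal.{1} | ∃ S : Set (a → Ordinal.{0}), S ⊆ ProdChoice a ∧ #S = c ∧
    ∀ g ∈ ProdChoice a, ∃ f ∈ S, { i | g i ≤ f i } ∈ F }

/-- `pcf a` is the set of possible cofinalities of `∏ a`: cardinals `θ` such that for some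
ultrafilter `F` on `a`, the cofinality of the linear order `∏ a / F` is `θ`. -/
def pcf (a : Set Cardinal.{0}) : Set Cardinal.{0} :=
  { θ | ∃ F : Ultrafilter a, cofUlt a F = Cardinal.lift.{1} θ }

/-- The cofinality of the product `∏ a` under pointwise domination: the least cardinality
of a set `P` of choice functions such that every choice function is dominated pointwise by
a member of `P`. -/
noncomputable def prodCof (a : Set Cardinal.{0}) : Cardinal.{1} :=
  sInf { c : Cardinal.{1} | ∃ S : Set (a → Ordinal.{0}), S ⊆ ProdChoice a ∧ #S = c ∧
    ∀ g ∈ ProdChoice a, ∃ f ∈ S, ∀ i, g i ≤ f i }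

/-- `PPset lam kap` is the set of cofinalities of ultraproducts `∏ a / F`, where `a` is a
set of at most `kap` regular cardinals below `lam`, unbounded in `lam`, and `F` is an
ultrafilter on `a` containing no subset of `a` bounded below `lam`. -/
def PPset (lam kap : Cardinal.{0}) : Set Cardinal.{0} :=
  { θ | ∃ (a : Set Cardinal.{0}) (F : Ultrafilter a),
      (∀ μ ∈ a, μ.IsRegular ∧ μ < lam) ∧
      #a ≤ Cardinal.lift.{1} kap ∧
      (∀ μ < lam, ∃ ν ∈ a, μ < ν) ∧
      (∀ b ∈ F, ¬ ∃ μ < lam, ∀ ν ∈ b, (ν : Cardinal) ≤ μ) ∧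
      cofUlt a F = Cardinal.lift.{1} θ }

/-- The pseudopower `pp_κ(λ)`: the supremum of the cofinalities in `PPset lam kap`. -/
noncomputable def ppc (lam kap : Cardinal.{0}) : Cardinal.{0} :=
  sSup (PPset lam kap)

/-- `pp λ = pp_{cof λ}(λ)`. -/
noncomputable def pp (lam : Cardinal.{0}) : Cardinal.{0} :=
  ppc lam lam.ord.cof

/-- A cardinal is singular if it is infinite and greater than its cofinality. -/
def IsSingular (lam : Cardinal.{0}) : Prop :=
  ℵ₀ ≤ lam ∧ lam.ord.cof < lam

namespace PCF4

variable (A : Set Cardinal.{0})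

def Jle (θ : Cardinal.{0}) : Set (Set A) :=
  {b | ∀ D : Ultrafilter A, b ∈ D → cofUlt A D ≤ Cardinal.lift.{1} θ}

def Jlt (θ : Cardinal.{0}) : Set (Set A) :=
  {b | ∀ D : Ultrafilter A, b ∈ D → cofUlt A D < Cardinal.lift.{1} θ}

variable {A}

lemma ord_pos_of_mem (hreg : ∀ l ∈ A, Cardinal.IsRegular l) (i : A) :
    (0 : Ordinal) < (i : Cardinal).ord := by
  have h := (hreg i i.2).pos
  have := Cardinal.ord_lt_ord.mpr h
  simpa [Cardinal.ord_zero] using this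

lemma zero_mem_prodChoice (hreg : ∀ l ∈ A, Cardinal.IsRegular l) :
    (fun _ : A => (0 : Ordinal)) ∈ ProdChoice A := by
  intro i
  exact ord_pos_of_mem hreg i

lemma cofUlt_le_mk (D : Ultrafilter A) {S : Set (A → Ordinal.{0})} (hS : S ⊆ ProdChoice A)
    (hdom : ∀ g ∈ ProdChoice A, ∃ f ∈ S, {i | g i ≤ f i} ∈ D) : cofUlt A D ≤ #S :=
  csInf_le' ⟨S, hS, rfl, hdom⟩

lemma exists_dominating (D : Ultrafilter A) :
    ∃ S : Set (A → Ordinal.{0}), S ⊆ ProdChoice A ∧ #S = cofUlt A D ∧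
      ∀ g ∈ ProdChoice A, ∃ f ∈ S, {i | g i ≤ f i} ∈ D := by
  have hne : { c : Cardinal.{1} | ∃ S : Set (A → Ordinal.{0}), S ⊆ ProdChoice A ∧ #S = c ∧
      ∀ g ∈ ProdChoice A, ∃ f ∈ S, { i | g i ≤ f i } ∈ D }.Nonempty := by
    refine ⟨#(ProdChoice A), ProdChoice A, le_refl _, rfl, fun g hg => ⟨g, hg, ?_⟩⟩
    have : {i : A | g i ≤ g i} = Set.univ := by ext i; simp
    rw [this]
    exact Filter.univ_mem
  have h := csInf_mem hne
  obtain ⟨S, h1, h2, h3⟩ := h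
  exact ⟨S, h1, h2, h3⟩

lemma exists_strict_ub (D : Ultrafilter A) {S : Set (A → Ordinal.{0})} (hS : S ⊆ ProdChoice A)
    (hreg : ∀ l ∈ A, Cardinal.IsRegular l)
    (hlt : #S < cofUlt A D) :
    ∃ u ∈ ProdChoice A, ∀ f ∈ S, {i | f i < u i} ∈ D := by
  by_contra hcon
  push_neg at hcon
  have hdom : ∀ g ∈ ProdChoice A, ∃ f ∈ S, {i | g i ≤ f i} ∈ D := by
    intro g hg
    obtain ⟨f, hf, hnd⟩ := hcon g hg
    refine ⟨f, hf, ?_⟩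
    have h2 : {i : A | f i < g i}ᶜ ∈ D := Ultrafilter.compl_mem_iff_notMem.mpr hnd
    have h3 : {i : A | f i < g i}ᶜ = {i : A | g i ≤ f i} := by
      ext i; simp [not_lt]
    rwa [h3] at h2
  exact absurd (cofUlt_le_mk D hS hdom) (not_le.mpr hlt)

lemma Jle_subset_Jlt {θ θ' : Cardinal.{0}} (h : θ < θ') : Jle A θ ⊆ Jlt A θ' :=
  fun _ hb D hD => lt_of_le_of_lt (hb D hD) (Cardinal.lift_lt.mpr h)

lemma empty_mem_Jle (θ : Cardinal.{0}) : (∅ : Set A) ∈ Jle A θ :=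
  fun D hD => absurd hD D.empty_notMem

lemma subset_mem_Jle {θ : Cardinal.{0}} {b b' : Set A} (hb : b ∈ Jle A θ) (h : b' ⊆ b) :
    b' ∈ Jle A θ :=
  fun D hD => hb D (Filter.mem_of_superset hD h)

lemma union_mem_Jle {θ : Cardinal.{0}} {b b' : Set A} (h1 : b ∈ Jle A θ) (h2 : b' ∈ Jle A θ) :
    b ∪ b' ∈ Jle A θ :=
  fun D hD => (Ultrafilter.union_mem_iff.mp hD).elim (h1 D) (h2 D)

lemma Jle_lt_trans {θ : Cardinal.{0}} {f g h : A → Ordinal.{0}}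
    (h1 : {i | h i < g i} ∈ Jle A θ) (h2 : {i | g i < f i} ∈ Jle A θ) :
    {i | h i < f i} ∈ Jle A θ := by
  refine subset_mem_Jle (union_mem_Jle h1 h2) ?_
  intro i hi
  rcases le_or_gt (g i) (h i) with hle | hlt
  · exact Or.inr (lt_of_le_of_lt hle hi)
  · exact Or.inl hlt

lemma cofUlt_le_of_singleton_mem (hreg : ∀ l ∈ A, Cardinal.IsRegular l) (i₀ : A)
    (D : Ultrafilter A) (h : {i₀} ∈ D) :
    cofUlt A D ≤ Cardinal.lift.{1} (i₀ : Cardinal) := by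
  classical
  set S : Set (A → Ordinal.{0}) :=
    Set.range (fun β : ↥(Set.Iio (i₀ : Cardinal).ord) =>
      (fun i : A => if i = i₀ then (β : Ordinal) else 0)) with hSdef
  have hS : S ⊆ ProdChoice A := by
    rintro f ⟨β, rfl⟩ i
    dsimp only
    split_ifs with hii
    · rw [hii]; exact β.2
    · exact ord_pos_of_mem hreg i
  have hdom : ∀ g ∈ ProdChoice A, ∃ f ∈ S, {i | g i ≤ f i} ∈ D := by
    intro g hg
    refine ⟨_, ⟨⟨g i₀, hg i₀⟩, rfl⟩, Filter.mem_of_superset h ?_⟩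
    intro i hi
    rcases hi with rfl
    simp
  calc cofUlt A D ≤ #S := cofUlt_le_mk D hS hdom
    _ ≤ #(Set.Iio (i₀ : Cardinal).ord) := mk_range_le
    _ = Cardinal.lift.{1} ((i₀ : Cardinal).ord).card := Ordinal.mk_Iio_ordinal _
    _ = Cardinal.lift.{1} (i₀ : Cardinal) := by rw [Cardinal.card_ord]

lemma mem_iff_of_singleton_mem {i₀ : A} {D : Ultrafilter A} (h : {i₀} ∈ D) (s : Set A) :
    s ∈ D ↔ i₀ ∈ s := by
  constructor
  · intro hs
    obtain ⟨x, hx1, hx2⟩ := Filter.nonempty_of_mem (Filter.inter_mem hs h)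
    rcases hx2 with rfl
    exact hx1
  · intro hs
    exact Filter.mem_of_superset h (by simpa [Set.singleton_subset_iff] using hs)

lemma eq_of_singleton_mem {i₀ : A} {D D' : Ultrafilter A} (h : {i₀} ∈ D) (h' : {i₀} ∈ D') :
    D = D' := by
  apply Ultrafilter.coe_injective
  apply Filter.ext
  intro s
  rw [show (s ∈ (D : Filter A)) = (s ∈ D) from rfl, show (s ∈ (D' : Filter A)) = (s ∈ D') from rfl,
    mem_iff_of_singleton_mem h, mem_iff_of_singleton_mem h']

attribute [local instance] Classical.propDecidable

variable (A : Set Cardinal.{0})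

variable (lam mu : Cardinal.{0})

noncomputable def wFun (P : Set (A → Ordinal.{0})) : A → Ordinal.{0} :=
  if hw : ∃ h, h ∈ ProdChoice A ∧ ∀ x ∈ P, {i | h i < x i} ∈ Jle A lam then hw.choose
  else fun _ => 0

noncomputable def gSeq (F : Ordinal.{0} → A → Ordinal.{0}) : Ordinal.{0} → A → Ordinal.{0} :=
  WellFounded.fix Ordinal.lt_wf fun α rec =>
    fun i => max (max (wFun A lam {x | ∃ β, ∃ h : β < α, x = rec β h} i) (F α i))
      (if mu < (i : Cardinal) then Ordinal.bsup.{0,0} α (fun β h => rec β h i) + 1 else 0)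

theorem gSeq_eq (F : Ordinal.{0} → A → Ordinal.{0}) (α : Ordinal.{0}) :
    gSeq A lam mu F α = fun i =>
      max (max (wFun A lam {x | ∃ β, ∃ _ : β < α, x = gSeq A lam mu F β} i) (F α i))
        (if mu < (i : Cardinal) then
          Ordinal.bsup.{0,0} α (fun β _ => gSeq A lam mu F β i) + 1 else 0) :=
  WellFounded.fix_eq _ _ _

noncomputable def sBad (g : Ordinal.{0} → A → Ordinal.{0}) (t : A → Ordinal.{0}) : Ordinal.{0} :=
  sInf {α | α < mu.ord ∧ {i | t i < g α i} ∉ Jle A lam}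

def stepProp (g : Ordinal.{0} → A → Ordinal.{0}) (t : A → Ordinal.{0}) : Prop :=
  ∃ p : Ultrafilter A × (A → Ordinal.{0}), p.2 ∈ ProdChoice A ∧
    {i | t i < g (sBad A lam mu g t) i} ∈ p.1 ∧
    Cardinal.lift.{1} lam < cofUlt A p.1 ∧
    ∀ α < mu.ord, {i | g α i < p.2 i} ∈ p.1

noncomputable def uFun (g : Ordinal.{0} → A → Ordinal.{0}) (t : A → Ordinal.{0}) :
    A → Ordinal.{0} :=
  if hp : stepProp A lam mu g t then hp.choose.2 else fun _ => 0

noncomputable def hSeq (g : Ordinal.{0} → A → Ordinal.{0}) : Ordinal.{0} → A → Ordinal.{0} :=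
  WellFounded.fix Ordinal.lt_wf fun ξ rec =>
    fun i => Ordinal.bsup.{0,0} ξ fun η h => max (rec η h i) (uFun A lam mu g (rec η h) i)

theorem hSeq_eq (g : Ordinal.{0} → A → Ordinal.{0}) (ξ : Ordinal.{0}) :
    hSeq A lam mu g ξ = fun i =>
      Ordinal.bsup.{0,0} ξ fun η _ =>
        max (hSeq A lam mu g η i) (uFun A lam mu g (hSeq A lam mu g η) i) :=
  WellFounded.fix_eq _ _ _

theorem hSeq_mono (g : Ordinal.{0} → A → Ordinal.{0}) {η ξ : Ordinal.{0}} (h : η ≤ ξ) (i : A) :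
    hSeq A lam mu g η i ≤ hSeq A lam mu g ξ i := by
  rcases lt_or_eq_of_le h with hlt | rfl
  · conv_rhs => rw [hSeq_eq]
    exact le_trans (le_max_left _ _) (Ordinal.le_bsup (fun η _ => max (hSeq A lam mu g η i)
      (uFun A lam mu g (hSeq A lam mu g η) i)) η hlt)
  · exact le_rfl

theorem hSeq_step (g : Ordinal.{0} → A → Ordinal.{0}) (ξ : Ordinal.{0}) (i : A) :
    max (hSeq A lam mu g ξ i) (uFun A lam mu g (hSeq A lam mu g ξ) i)
      ≤ hSeq A lam mu g (ξ + 1) i := by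
  conv_rhs => rw [hSeq_eq]
  exact Ordinal.le_bsup (fun η _ => max (hSeq A lam mu g η i)
    (uFun A lam mu g (hSeq A lam mu g η) i)) ξ (by rw [Ordinal.add_one_eq_succ]; exact Order.lt_succ ξ)

theorem directed (hreg : ∀ l ∈ A, Cardinal.IsRegular l)
    (a0 : Cardinal.{0}) (ha0inf : ℵ₀ ≤ a0) (ha0card : #↥A ≤ Cardinal.lift.{1} a0)
    (hgt : ∀ i : A, a0 < (i : Cardinal))
    (lam : Cardinal.{0}) :
    ∀ mu : Cardinal.{0}, mu ≤ lam → ∀ S : Set (A → Ordinal.{0}), S ⊆ ProdChoice A →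
      #S ≤ Cardinal.lift.{1} mu →
      ∃ h ∈ ProdChoice A, ∀ f ∈ S, {i | h i < f i} ∈ Jle A lam := by
  intro mu0
  refine Cardinal.lt_wf.induction
    (C := fun mu => mu ≤ lam → ∀ S : Set (A → Ordinal.{0}), S ⊆ ProdChoice A →
      #↥S ≤ Cardinal.lift.{1} mu →
      ∃ h ∈ ProdChoice A, ∀ f ∈ S, {i | h i < f i} ∈ Jle A lam) mu0 ?_
  intro mu IH hmule S hS hScard
  -- enumeration of S by ordinals below mu.ord
  have hSle : #↥S ≤ #↥(Set.Iio mu.ord) := by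
    rw [Ordinal.mk_Iio_ordinal, Cardinal.card_ord]; exact hScard
  obtain ⟨emb⟩ : Nonempty (↥S ↪ ↥(Set.Iio mu.ord)) := (Cardinal.le_def _ _).mp hSle
  set FS : Ordinal.{0} → A → Ordinal.{0} := fun β =>
    if h : ∃ f : ↥S, ((emb f : ↥(Set.Iio mu.ord)) : Ordinal) = β then
      ((h.choose : ↥S) : A → Ordinal.{0}) else fun _ => 0 with hFSdef
  have FS_mem : ∀ β, FS β ∈ ProdChoice A := by
    intro β
    rw [hFSdef]
    dsimp only
    split_ifs with h
    · exact hS h.choose.2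
    · exact zero_mem_prodChoice hreg
  have FS_cover : ∀ f, f ∈ S → ∃ β, β < mu.ord ∧ FS β = f := by
    intro f hf
    refine ⟨((emb ⟨f, hf⟩ : ↥(Set.Iio mu.ord)) : Ordinal), (emb ⟨f, hf⟩).2, ?_⟩
    rw [hFSdef]
    dsimp only
    have hex : ∃ g : ↥S, ((emb g : ↥(Set.Iio mu.ord)) : Ordinal)
        = ((emb ⟨f, hf⟩ : ↥(Set.Iio mu.ord)) : Ordinal) := ⟨⟨f, hf⟩, rfl⟩
    rw [dif_pos hex]
    have h1 : emb hex.choose = emb ⟨f, hf⟩ := Subtype.coe_injective hex.choose_spec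
    have h2 : hex.choose = ⟨f, hf⟩ := emb.injective h1
    rw [h2]
  by_cases hbig : ∀ i : A, mu < (i : Cardinal)
  · -- Case 1 : pointwise supremum works
    refine ⟨fun i => Ordinal.bsup.{0,0} mu.ord (fun β _ => FS β i), ?_, ?_⟩
    · intro i
      refine Ordinal.bsup_lt_ord ?_ (fun β hβ => FS_mem β i)
      rw [Cardinal.card_ord, (hreg i i.2).cof_eq]
      exact hbig i
    · intro f hf
      obtain ⟨β, hβ, hfe⟩ := FS_cover f hf
      refine subset_mem_Jle (empty_mem_Jle lam) ?_
      intro i hi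
      exact absurd hi (not_lt.mpr (hfe ▸ Ordinal.le_bsup (fun β _ => FS β i) β hβ))
  push_neg at hbig
  obtain ⟨i₀, hi₀⟩ := hbig
  have hmuinf : ℵ₀ ≤ mu := le_trans (hreg i₀ i₀.2).aleph0_le hi₀
  have hmulim : Order.IsSuccLimit mu.ord := Cardinal.isSuccLimit_ord hmuinf
  by_cases hregmu : mu ≤ mu.ord.cof
  case neg =>
    -- singular case
    have hcof_lt : mu.ord.cof < mu := not_le.mp hregmu
    obtain ⟨Fc, hFc⟩ := Ordinal.exists_blsub_cof mu.ord
    have hFclt : ∀ ξ (hξ : ξ < mu.ord.cof.ord), Fc ξ hξ < mu.ord := by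
      intro ξ hξ
      conv_rhs => rw [← hFc]
      exact Ordinal.lt_blsub Fc ξ hξ
    have piece : ∀ t, t < mu.ord →
        ∃ h, h ∈ ProdChoice A ∧ ∀ f, (∃ hf : f ∈ S,
          ((emb ⟨f, hf⟩ : ↥(Set.Iio mu.ord)) : Ordinal) ≤ t) → {i | h i < f i} ∈ Jle A lam := by
      intro t ht
      have hst : t + 1 < mu.ord := by
        rw [Ordinal.add_one_eq_succ]; exact hmulim.succ_lt ht
      have hν : (t + 1).card < mu := Cardinal.lt_ord.mp hst
      have := IH (t + 1).card hν (le_of_lt (lt_of_lt_of_le hν hmule))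
        {f | ∃ hf : f ∈ S, ((emb ⟨f, hf⟩ : ↥(Set.Iio mu.ord)) : Ordinal) ≤ t}
        (fun f hf => hS hf.choose) ?_
      · obtain ⟨h, h1, h2⟩ := this
        exact ⟨h, h1, fun f hf => h2 f hf⟩
      · -- cardinality of the piece
        have hemb2 : Nonempty (↥{f | ∃ hf : f ∈ S,
            ((emb ⟨f, hf⟩ : ↥(Set.Iio mu.ord)) : Ordinal) ≤ t} ↪ ↥(Set.Iio (t + 1))) := by
          refine ⟨⟨fun x => ⟨((emb ⟨x.1, x.2.choose⟩ : ↥(Set.Iio mu.ord)) : Ordinal), ?_⟩, ?_⟩⟩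
          · have := x.2.choose_spec
            simp only [Set.mem_Iio]
            rw [Ordinal.add_one_eq_succ, Order.lt_succ_iff]
            exact this
          · intro x y hxy
            simp only [Subtype.mk.injEq] at hxy
            have h1 : emb ⟨x.1, x.2.choose⟩ = emb ⟨y.1, y.2.choose⟩ := Subtype.coe_injective hxy
            have h2 := emb.injective h1
            have h3 : x.1 = y.1 := congrArg (Subtype.val : ↥S → (A → Ordinal.{0})) h2
            exact Subtype.coe_injective h3
        calc #↥{f | ∃ hf : f ∈ S, ((emb ⟨f, hf⟩ : ↥(Set.Iio mu.ord)) : Ordinal) ≤ t}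
            ≤ #↥(Set.Iio (t + 1)) := Cardinal.mk_le_of_injective hemb2.some.injective
          _ = Cardinal.lift.{1} (t + 1).card := Ordinal.mk_Iio_ordinal _
    choose Hp Hp1 Hp2 using piece
    set vals : ↥(Set.Iio mu.ord.cof.ord) → (A → Ordinal.{0}) :=
      fun p => Hp (Fc p.1 p.2) (hFclt p.1 p.2) with hvals
    have hSout : Set.range vals ⊆ ProdChoice A := by
      rintro x ⟨p, rfl⟩; exact Hp1 _ _
    have hSoutcard : #↥(Set.range vals) ≤ Cardinal.lift.{1} mu.ord.cof := by
      calc #↥(Set.range vals) ≤ #↥(Set.Iio mu.ord.cof.ord) := Cardinal.mk_range_le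
        _ = Cardinal.lift.{1} mu.ord.cof.ord.card := Ordinal.mk_Iio_ordinal _
        _ = Cardinal.lift.{1} mu.ord.cof := by rw [Cardinal.card_ord]
    obtain ⟨H, hH1, hH2⟩ := IH mu.ord.cof hcof_lt
      (le_of_lt (lt_of_lt_of_le hcof_lt hmule)) (Set.range vals) hSout hSoutcard
    refine ⟨H, hH1, ?_⟩
    intro f hf
    have hβ : ((emb ⟨f, hf⟩ : ↥(Set.Iio mu.ord)) : Ordinal) < mu.ord := (emb ⟨f, hf⟩).2
    obtain ⟨ξ, hξ, hle⟩ := Ordinal.lt_blsub_iff.mp (show _ < Ordinal.blsub _ Fc by rw [hFc]; exact hβ)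
    refine Jle_lt_trans (hH2 (vals ⟨ξ, hξ⟩) ⟨⟨ξ, hξ⟩, rfl⟩) ?_
    exact Hp2 (Fc ξ hξ) (hFclt ξ hξ) f ⟨hf, hle⟩
  case pos =>
    have hcofeq : mu.ord.cof = mu := le_antisymm (Ordinal.cof_ord_le mu) hregmu
    -- ===================== regular case =====================
    set g : Ordinal.{0} → A → Ordinal.{0} := gSeq A lam mu FS with hgdef
    have gspec : ∀ α, α < mu.ord →
        (g α ∈ ProdChoice A ∧ (∀ i, FS α i ≤ g α i) ∧
          ∀ β, β < α → ({i | g α i < g β i} ∈ Jle A lam ∧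
            ∀ i : A, mu < (i : Cardinal) → g β i < g α i)) := by
      intro α
      induction α using Ordinal.induction with
      | h α IHa =>
      intro hα
      have hwex : ∃ h, h ∈ ProdChoice A ∧
          ∀ x ∈ {x | ∃ β, ∃ _ : β < α, x = g β}, {i | h i < x i} ∈ Jle A lam := by
        have hprevsub : {x | ∃ β, ∃ _ : β < α, x = g β} ⊆ ProdChoice A := by
          rintro x ⟨β, hβ, rfl⟩
          exact (IHa β hβ (hβ.trans hα)).1
        have hprevcard : #↥{x | ∃ β, ∃ _ : β < α, x = g β} ≤ Cardinal.lift.{1} α.card := by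
          have hsub : {x | ∃ β, ∃ _ : β < α, x = g β} ⊆
              Set.range (fun p : ↥(Set.Iio α) => g p.1) := by
            rintro x ⟨β, hβ, rfl⟩; exact ⟨⟨β, hβ⟩, rfl⟩
          calc #↥{x | ∃ β, ∃ _ : β < α, x = g β}
              ≤ #↥(Set.range fun p : ↥(Set.Iio α) => g p.1) := Cardinal.mk_le_mk_of_subset hsub
            _ ≤ #↥(Set.Iio α) := Cardinal.mk_range_le
            _ = Cardinal.lift.{1} α.card := Ordinal.mk_Iio_ordinal α
        obtain ⟨h, h1, h2⟩ := IH α.card (Cardinal.lt_ord.mp hα)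
          (le_of_lt (lt_of_lt_of_le (Cardinal.lt_ord.mp hα) hmule)) _ hprevsub hprevcard
        exact ⟨h, h1, h2⟩
      have hge : g α = fun i =>
          max (max (wFun A lam {x | ∃ β, ∃ _ : β < α, x = g β} i) (FS α i))
            (if mu < (i : Cardinal) then
              Ordinal.bsup.{0,0} α (fun β _ => g β i) + 1 else 0) := by
        rw [hgdef]; exact gSeq_eq A lam mu FS α
      have hWeq : wFun A lam {x | ∃ β, ∃ _ : β < α, x = g β} = hwex.choose := by
        unfold wFun; exact dif_pos hwex
      have hW1 : wFun A lam {x | ∃ β, ∃ _ : β < α, x = g β} ∈ ProdChoice A := by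
        rw [hWeq]; exact hwex.choose_spec.1
      have hW2 : ∀ x ∈ {x | ∃ β, ∃ _ : β < α, x = g β},
          {i | wFun A lam {x | ∃ β, ∃ _ : β < α, x = g β} i < x i} ∈ Jle A lam := by
        rw [hWeq]; exact hwex.choose_spec.2
      refine ⟨?_, ?_, ?_⟩
      · intro i
        have hgi := congrFun hge i
        rw [hgi]
        refine max_lt (max_lt (hW1 i) (FS_mem α i)) ?_
        split_ifs with hbigi
        · have hbs : Ordinal.bsup.{0,0} α (fun β _ => g β i) < (i : Cardinal).ord := by
            refine Ordinal.bsup_lt_ord ?_ (fun β hβ => (IHa β hβ (hβ.trans hα)).1 i)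
            rw [(hreg i i.2).cof_eq]
            exact lt_trans (Cardinal.lt_ord.mp hα) hbigi
          rw [Ordinal.add_one_eq_succ]
          exact (Cardinal.isSuccLimit_ord (hreg i i.2).aleph0_le).succ_lt hbs
        · exact ord_pos_of_mem hreg i
      · intro i
        have hgi := congrFun hge i
        rw [hgi]
        exact le_trans (le_max_right _ _) (le_max_left _ _)
      · intro β hβ
        constructor
        · refine subset_mem_Jle (hW2 (g β) ⟨β, hβ, rfl⟩) ?_
          intro i hi
          have hgi := congrFun hge i
          have hWle : wFun A lam {x | ∃ β, ∃ _ : β < α, x = g β} i ≤ g α i := by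
            rw [hgi]; exact le_trans (le_max_left _ _) (le_max_left _ _)
          exact lt_of_le_of_lt hWle hi
        · intro i hbigi
          have hgi := congrFun hge i
          have h1 : g β i ≤ Ordinal.bsup.{0,0} α (fun β _ => g β i) :=
            Ordinal.le_bsup (fun β _ => g β i) β hβ
          have h2 : Ordinal.bsup.{0,0} α (fun β _ => g β i)
              < Ordinal.bsup.{0,0} α (fun β _ => g β i) + 1 := by
            rw [Ordinal.add_one_eq_succ]; exact Order.lt_succ _
          have h3 : (if mu < (i : Cardinal) then
              Ordinal.bsup.{0,0} α (fun β _ => g β i) + 1 else 0) ≤ g α i := by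
            rw [hgi]; exact le_max_right _ _
          rw [if_pos hbigi] at h3
          exact lt_of_le_of_lt h1 (lt_of_lt_of_le h2 h3)
    by_cases hcset : {i : A | (i : Cardinal) ≤ mu} ∈ Jle A lam
    · -- Case A : small coordinates form a Jle set, take pointwise sup on large ones
      refine ⟨fun i => if (i : Cardinal) ≤ mu then 0
        else Ordinal.bsup.{0,0} mu.ord (fun α _ => g α i), ?_, ?_⟩
      · intro i
        dsimp only
        split_ifs with hsm
        · exact ord_pos_of_mem hreg i
        · refine Ordinal.bsup_lt_ord ?_ (fun α hα => (gspec α hα).1 i)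
          rw [Cardinal.card_ord, (hreg i i.2).cof_eq]
          exact not_le.mp hsm
      · intro f hf
        obtain ⟨α, hα, hfe⟩ := FS_cover f hf
        refine subset_mem_Jle hcset ?_
        intro i hi
        simp only [Set.mem_setOf_eq] at hi ⊢
        by_contra hile
        rw [if_neg hile] at hi
        have : f i ≤ Ordinal.bsup.{0,0} mu.ord (fun α _ => g α i) :=
          le_trans (hfe ▸ (gspec α hα).2.1 i) (Ordinal.le_bsup (fun α _ => g α i) α hα)
        exact absurd hi (not_lt.mpr this)
    · -- Case B : main transfinite construction
      have hk0reg : (Order.succ a0).IsRegular := Cardinal.isRegular_succ ha0inf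
      have hk0inf : ℵ₀ ≤ Order.succ a0 := hk0reg.aleph0_le
      have hk0le : Order.succ a0 ≤ mu := Order.succ_le_of_lt (lt_of_lt_of_le (hgt i₀) hi₀)
      have hk0lt : Order.succ a0 < mu := by
        rcases lt_or_eq_of_le hk0le with h | h
        · exact h
        · exfalso
          apply hcset
          intro D hD
          obtain ⟨i₁, hi₁⟩ := Filter.nonempty_of_mem hD
          have hii : ({i₁} : Set A) ∈ D := by
            refine Filter.mem_of_superset hD ?_
            intro j hj
            have h1 : (j : Cardinal) = mu := le_antisymm hj (h ▸ Order.succ_le_of_lt (hgt j))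
            have h2 : (i₁ : Cardinal) = mu := le_antisymm hi₁ (h ▸ Order.succ_le_of_lt (hgt i₁))
            exact Set.mem_singleton_iff.mpr (Subtype.coe_injective (h1.trans h2.symm))
          calc cofUlt A D ≤ Cardinal.lift.{1} (i₁ : Cardinal) :=
              cofUlt_le_of_singleton_mem hreg i₁ D hii
            _ ≤ Cardinal.lift.{1} lam := Cardinal.lift_le.mpr (le_trans hi₁ hmule)
      have hspec : ∀ ξ, ξ < (Order.succ a0).ord → hSeq A lam mu g ξ ∈ ProdChoice A := by
        intro ξ
        induction ξ using Ordinal.induction with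
        | h ξ IHx =>
        intro hξ i
        have heq : hSeq A lam mu g ξ i = Ordinal.bsup.{0,0} ξ (fun η _ =>
            max (hSeq A lam mu g η i) (uFun A lam mu g (hSeq A lam mu g η) i)) :=
          congrFun (hSeq_eq A lam mu g ξ) i
        rw [heq]
        refine Ordinal.bsup_lt_ord ?_ ?_
        · rw [(hreg i i.2).cof_eq]
          exact lt_of_le_of_lt (Order.lt_succ_iff.mp (Cardinal.lt_ord.mp hξ)) (hgt i)
        · intro η hη
          refine max_lt (IHx η hη (hη.trans hξ) i) ?_
          unfold uFun
          split_ifs with hsp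
          · exact hsp.choose_spec.1 i
          · exact ord_pos_of_mem hreg i
      have main : ∃ ξ, ξ < (Order.succ a0).ord ∧ ∀ α, α < mu.ord →
          {i | hSeq A lam mu g ξ i < g α i} ∈ Jle A lam := by
        by_contra hmain
        push_neg at hmain
        have hsb : ∀ ξ, ξ < (Order.succ a0).ord →
            sBad A lam mu g (hSeq A lam mu g ξ) < mu.ord ∧
            {i | hSeq A lam mu g ξ i < g (sBad A lam mu g (hSeq A lam mu g ξ)) i}
              ∉ Jle A lam := by
          intro ξ hξ
          obtain ⟨α, hα, hbad⟩ := hmain ξ hξ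
          have hTne : {α' | α' < mu.ord ∧
              {i | hSeq A lam mu g ξ i < g α' i} ∉ Jle A lam}.Nonempty := ⟨α, hα, hbad⟩
          have hmem := csInf_mem hTne
          exact ⟨hmem.1, hmem.2⟩
        have hfail : ∀ ξ, ξ < (Order.succ a0).ord →
            stepProp A lam mu g (hSeq A lam mu g ξ) := by
          intro ξ hξ
          have hA := (hsb ξ hξ).2
          simp only [Jle, Set.mem_setOf_eq] at hA
          push_neg at hA
          obtain ⟨D, hD1, hD2⟩ := hA
          have hgsub : {x | ∃ α', ∃ _ : α' < mu.ord, x = g α'} ⊆ ProdChoice A := by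
            rintro x ⟨α', hα', rfl⟩; exact (gspec α' hα').1
          have hgcard : #↥{x | ∃ α', ∃ _ : α' < mu.ord, x = g α'} < cofUlt A D := by
            have hsub : {x | ∃ α', ∃ _ : α' < mu.ord, x = g α'} ⊆
                Set.range (fun p : ↥(Set.Iio mu.ord) => g p.1) := by
              rintro x ⟨α', hα', rfl⟩; exact ⟨⟨α', hα'⟩, rfl⟩
            calc #↥{x | ∃ α', ∃ _ : α' < mu.ord, x = g α'}
                ≤ #↥(Set.range fun p : ↥(Set.Iio mu.ord) => g p.1) :=
                  Cardinal.mk_le_mk_of_subset hsub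
              _ ≤ #↥(Set.Iio mu.ord) := Cardinal.mk_range_le
              _ = Cardinal.lift.{1} mu.ord.card := Ordinal.mk_Iio_ordinal mu.ord
              _ = Cardinal.lift.{1} mu := by rw [Cardinal.card_ord]
              _ ≤ Cardinal.lift.{1} lam := Cardinal.lift_le.mpr hmule
              _ < cofUlt A D := hD2
          obtain ⟨u, hu1, hu2⟩ := exists_strict_ub D hgsub hreg hgcard
          exact ⟨(D, u), hu1, hD1, hD2, fun α' hα' => hu2 (g α') ⟨α', hα', rfl⟩⟩
        have hβlt : Ordinal.bsup.{0,0} (Order.succ a0).ord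
            (fun ξ _ => sBad A lam mu g (hSeq A lam mu g ξ)) < mu.ord := by
          refine Ordinal.bsup_lt_ord ?_ (fun ξ hξ => (hsb ξ hξ).1)
          rw [Cardinal.card_ord, hcofeq]
          exact hk0lt
        set β := Ordinal.bsup.{0,0} (Order.succ a0).ord
            (fun ξ _ => sBad A lam mu g (hSeq A lam mu g ξ)) with hβdef
        obtain ⟨embA⟩ : Nonempty (↥A ↪ ↥(Set.Iio a0.ord)) := by
          refine (Cardinal.le_def _ _).mp ?_
          rw [Ordinal.mk_Iio_ordinal, Cardinal.card_ord]
          exact ha0card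
        set eex : A → Ordinal.{0} := fun i =>
          sInf {ξ | ξ < (Order.succ a0).ord ∧ ¬ hSeq A lam mu g ξ i < g β i} with heexdef
        set ξ₁ := Ordinal.bsup.{0,0} a0.ord (fun γ _ =>
          if h : ∃ i : A, ((embA i : ↥(Set.Iio a0.ord)) : Ordinal) = γ then eex h.choose
          else 0) with hξ₁def
        have hξ₁lt : ξ₁ < (Order.succ a0).ord := by
          rw [hξ₁def]
          refine Ordinal.bsup_lt_ord ?_ ?_
          · rw [Cardinal.card_ord, hk0reg.cof_eq]
            exact Order.lt_succ a0
          · intro γ hγ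
            have h0lt : (0 : Ordinal) < (Order.succ a0).ord := by
              have h1 : (0 : Cardinal) < Order.succ a0 := lt_of_lt_of_le aleph0_pos hk0inf
              have := Cardinal.ord_lt_ord.mpr h1
              simpa [Cardinal.ord_zero] using this
            split_ifs with h
            · rw [heexdef]
              dsimp only
              rcases Set.eq_empty_or_nonempty {ξ | ξ < (Order.succ a0).ord ∧
                  ¬ hSeq A lam mu g ξ h.choose < g β h.choose} with he | hne
              · rw [he, Ordinal.sInf_empty]
                exact h0lt
              · exact (csInf_mem hne).1
            · exact h0lt
        have heexle : ∀ i : A, eex i ≤ ξ₁ := by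
          intro i
          have hpos : ∃ j : A, ((embA j : ↥(Set.Iio a0.ord)) : Ordinal)
              = ((embA i : ↥(Set.Iio a0.ord)) : Ordinal) := ⟨i, rfl⟩
          have hch : hpos.choose = i :=
            embA.injective (Subtype.coe_injective hpos.choose_spec)
          have hval := Ordinal.le_bsup (fun γ _ =>
            if h : ∃ j : A, ((embA j : ↥(Set.Iio a0.ord)) : Ordinal) = γ then eex h.choose
            else 0) ((embA i : ↥(Set.Iio a0.ord)) : Ordinal) (embA i).2
          rw [dif_pos hpos, hch] at hval
          rw [hξ₁def]
          exact hval
        have hstab : ∀ ξ, ξ₁ ≤ ξ → ξ < (Order.succ a0).ord → ∀ i : A,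
            (hSeq A lam mu g ξ i < g β i ↔ hSeq A lam mu g ξ₁ i < g β i) := by
          intro ξ hξa hξb i
          constructor
          · intro h
            exact lt_of_le_of_lt (hSeq_mono A lam mu g hξa i) h
          · intro h
            by_contra hnot
            have hne : {ξ' | ξ' < (Order.succ a0).ord ∧
                ¬ hSeq A lam mu g ξ' i < g β i}.Nonempty := ⟨ξ, hξb, hnot⟩
            have hmem := csInf_mem hne
            have h1 : ¬ hSeq A lam mu g (eex i) i < g β i := hmem.2
            exact h1 (lt_of_le_of_lt (hSeq_mono A lam mu g (heexle i) i) h)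
        have hsp := hfail ξ₁ hξ₁lt
        have huf : uFun A lam mu g (hSeq A lam mu g ξ₁) = hsp.choose.2 := by
          unfold uFun
          exact dif_pos hsp
        obtain ⟨hu1, hA1, hA2, hu2⟩ := hsp.choose_spec
        have hslt : sBad A lam mu g (hSeq A lam mu g ξ₁) < mu.ord := (hsb ξ₁ hξ₁lt).1
        have hsleβ : sBad A lam mu g (hSeq A lam mu g ξ₁) ≤ β := by
          rw [hβdef]
          exact Ordinal.le_bsup _ ξ₁ hξ₁lt
        have hN : {i | g β i < g (sBad A lam mu g (hSeq A lam mu g ξ₁)) i} ∈ Jle A lam := by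
          rcases lt_or_eq_of_le hsleβ with h | h
          · exact ((gspec β hβlt).2.2 _ h).1
          · have he : {i : A | g β i < g (sBad A lam mu g (hSeq A lam mu g ξ₁)) i} = ∅ := by
              rw [h]
              ext i
              simp
            rw [he]
            exact empty_mem_Jle lam
        have hNnD : {i | g β i < g (sBad A lam mu g (hSeq A lam mu g ξ₁)) i}
            ∉ hsp.choose.1 := fun hmem => absurd (hN hsp.choose.1 hmem) (not_le.mpr hA2)
        have hCD : {i | hSeq A lam mu g ξ₁ i < g β i} ∈ hsp.choose.1 := by
          have hsub : {i | hSeq A lam mu g ξ₁ i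
                < g (sBad A lam mu g (hSeq A lam mu g ξ₁)) i}
              ∩ {i | g β i < g (sBad A lam mu g (hSeq A lam mu g ξ₁)) i}ᶜ
              ⊆ {i | hSeq A lam mu g ξ₁ i < g β i} := by
            rintro i ⟨h1, h2⟩
            have h2' : ¬ g β i < g (sBad A lam mu g (hSeq A lam mu g ξ₁)) i := h2
            exact lt_of_lt_of_le h1 (not_lt.mp h2')
          exact Filter.mem_of_superset
            (Filter.inter_mem hA1 (Ultrafilter.compl_mem_iff_notMem.mpr hNnD)) hsub
        have hgu : {i | g β i < hsp.choose.2 i} ∈ hsp.choose.1 := hu2 β hβlt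
        obtain ⟨i, hi1, hi2⟩ := Filter.nonempty_of_mem (Filter.inter_mem hCD hgu)
        have hsucc : ξ₁ + 1 < (Order.succ a0).ord := by
          rw [Ordinal.add_one_eq_succ]
          exact (Cardinal.isSuccLimit_ord hk0inf).succ_lt hξ₁lt
        have hle1 : ξ₁ ≤ ξ₁ + 1 := by
          rw [Ordinal.add_one_eq_succ]
          exact le_of_lt (Order.lt_succ ξ₁)
        have hC2 : hSeq A lam mu g (ξ₁ + 1) i < g β i := (hstab (ξ₁ + 1) hle1 hsucc i).mpr hi1
        have hule : hsp.choose.2 i ≤ hSeq A lam mu g (ξ₁ + 1) i := by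
          have hst := hSeq_step A lam mu g ξ₁ i
          rw [huf] at hst
          exact le_trans (le_max_right _ _) hst
        exact absurd (lt_trans hi2 (lt_of_le_of_lt hule hC2)) (lt_irrefl _)
      obtain ⟨ξ, hξ, hbb⟩ := main
      refine ⟨hSeq A lam mu g ξ, hspec ξ hξ, ?_⟩
      intro f hf
      obtain ⟨α, hα, hfe⟩ := FS_cover f hf
      refine subset_mem_Jle (hbb α hα) ?_
      intro i hi
      exact lt_of_lt_of_le hi (hfe ▸ (gspec α hα).2.1 i)


lemma exists_gen (hreg : ∀ l ∈ A, Cardinal.IsRegular l)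
    (hgt : ∀ l ∈ A, #↥A < Cardinal.lift.{1} l) (lam : Cardinal.{0}) (hpcf : lam ∈ pcf A) :
    ∃ b : Set ↥A, b ∈ Jle A lam ∧ b ∉ Jlt A lam := by
  obtain ⟨D, hD⟩ := hpcf
  by_cases hfin : A.Finite
  · haveI : Finite ↥A := hfin.to_subtype
    have hsing : ∃ i₀ : ↥A, ({i₀} : Set ↥A) ∈ D := by
      by_contra hcon
      push_neg at hcon
      have hcompl : ∀ i : ↥A, ({i} : Set ↥A)ᶜ ∈ D :=
        fun i => Ultrafilter.compl_mem_iff_notMem.mpr (hcon i)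
      have hint : (⋂ i : ↥A, ({i} : Set ↥A)ᶜ) ∈ D := Filter.iInter_mem.mpr hcompl
      have he : (⋂ i : ↥A, ({i} : Set ↥A)ᶜ) = ∅ := by ext x; simp
      rw [he] at hint
      exact D.empty_notMem hint
    obtain ⟨i₀, hi₀⟩ := hsing
    refine ⟨{i₀}, ?_, ?_⟩
    · intro D' hD'
      have hDD : D' = D := eq_of_singleton_mem hD' hi₀
      rw [hDD, hD]
    · intro hmem
      have h1 := hmem D hi₀
      rw [hD] at h1
      exact lt_irrefl _ h1
  · have hinf : A.Infinite := hfin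
    haveI : Infinite ↥A := Set.infinite_coe_iff.mpr hinf
    obtain ⟨l₀, hl₀⟩ := hinf.nonempty
    obtain ⟨a0, ha0⟩ := Set.mem_range.mp (Cardinal.mem_range_lift_of_le (le_of_lt (hgt l₀ hl₀)))
    have ha0inf : ℵ₀ ≤ a0 := by
      have h1 : ℵ₀ ≤ #↥A := Cardinal.aleph0_le_mk ↥A
      rw [← ha0, ← Cardinal.lift_aleph0.{1,0}] at h1
      exact Cardinal.lift_le.mp h1
    have hgt' : ∀ i : ↥A, a0 < (i : Cardinal) := by
      intro i
      have h1 := hgt i i.2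
      rw [← ha0] at h1
      exact Cardinal.lift_lt.mp h1
    obtain ⟨Sd, hSd1, hSd2, hSd3⟩ := exists_dominating D
    have hScard : #↥Sd ≤ Cardinal.lift.{1} lam := by rw [hSd2, hD]
    obtain ⟨h, hh1, hh2⟩ := directed A hreg a0 ha0inf (le_of_eq ha0.symm) hgt' lam lam
      le_rfl Sd hSd1 hScard
    by_contra hcon
    push_neg at hcon
    -- hcon : ∀ b ∈ Jle A lam, b ∈ Jlt A lam
    have hnotD : ∀ f ∈ Sd, {i | f i ≤ h i} ∈ D := by
      intro f hf
      have hbad : {i | h i < f i} ∈ Jle A lam := hh2 f hf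
      have hlt : {i | h i < f i} ∈ Jlt A lam := hcon _ hbad
      have hnd : {i | h i < f i} ∉ D := by
        intro hmem
        have := hlt D hmem
        rw [hD] at this
        exact lt_irrefl _ this
      have hc : {i : ↥A | h i < f i}ᶜ ∈ D := Ultrafilter.compl_mem_iff_notMem.mpr hnd
      have he : {i : ↥A | h i < f i}ᶜ = {i | f i ≤ h i} := by ext i; simp [not_lt]
      rwa [he] at hc
    have hg1 : (fun i => h i + 1) ∈ ProdChoice A := by
      intro i
      show h i + 1 < (i : Cardinal).ord
      have h1 : h i < (i : Cardinal).ord := hh1 i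
      rw [Ordinal.add_one_eq_succ]
      exact (Cardinal.isSuccLimit_ord (hreg i i.2).aleph0_le).succ_lt h1
    obtain ⟨f, hf, hdom⟩ := hSd3 _ hg1
    obtain ⟨i, hi1, hi2⟩ := Filter.nonempty_of_mem (Filter.inter_mem hdom (hnotD f hf))
    have hi1' : h i + 1 ≤ f i := hi1
    have hi2' : f i ≤ h i := hi2
    have : h i < h i := lt_of_lt_of_le (lt_of_lt_of_le (by
      rw [Ordinal.add_one_eq_succ]; exact Order.lt_succ (h i)) hi1') hi2'
    exact lt_irrefl _ this

end PCF4


/-- For a set `a` of regular cardinals each greater than `|a|`, `pcf a` contains at most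
`2 ^ |a|` cardinals. -/
theorem stmt4 (a : Set Cardinal.{0})
    (hreg : ∀ lam ∈ a, Cardinal.IsRegular lam)
    (hgt : ∀ lam ∈ a, #a < Cardinal.lift.{1} lam) :
    #(pcf a) ≤ 2 ^ #a := by
  classical
  have key : ∀ lam ∈ pcf a, ∃ b : Set ↥a, b ∈ PCF4.Jle a lam ∧ b ∉ PCF4.Jlt a lam :=
    fun lam h => PCF4.exists_gen a hreg hgt lam h
  choose bfun hb1 hb2 using key
  have hinj : Function.Injective (fun x : ↥(pcf a) => bfun x.1 x.2) := by
    intro x y hxy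
    simp only at hxy
    rcases lt_trichotomy (x : Cardinal) (y : Cardinal) with h | h | h
    · exfalso
      have h1 : bfun x.1 x.2 ∈ PCF4.Jlt a y.1 := PCF4.Jle_subset_Jlt h (hb1 x.1 x.2)
      rw [hxy] at h1
      exact hb2 y.1 y.2 h1
    · exact Subtype.coe_injective h
    · exfalso
      have h1 : bfun y.1 y.2 ∈ PCF4.Jlt a x.1 := PCF4.Jle_subset_Jlt h (hb1 y.1 y.2)
      rw [← hxy] at h1
      exact hb2 x.1 x.2 h1
  calc #↥(pcf a) ≤ #(Set ↥a) := Cardinal.mk_le_of_injective hinj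
    _ = 2 ^ #↥a := Cardinal.mk_set
end

section
/- Let a be a set of distinct regular cardinals each greater than |a|. Then pcf(a) has a largest element, i.e., there exists θ ∈ pcf(a) such that every member of pcf(a) is ≤ θ. -/
open Cardinal Ordinal

namespace PCFAux

variable {a : Set Cardinal.{0}}


/-- `typein` with explicit well-order instance (instance synthesis on `toType` is flaky). -/
noncomputable def tin {o : Ordinal.{u}} (b : o.ToType) : Ordinal.{u} :=
  @typein o.ToType (· < ·) isWellOrder_lt b

/-- `enum` with explicit well-order instance. -/
noncomputable def ten (o : Ordinal.{u}) (x : Ordinal.{u}) (h : x < o) : o.ToType := by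
  refine (@enum o.ToType (· < ·) isWellOrder_lt) ⟨x, ?_⟩
  rw [type_toType]; exact h

theorem tin_lt {o : Ordinal.{u}} (b : o.ToType) : tin b < o := by
  have := typein_lt_self (o := o) b
  exact this

theorem tin_ten {o x : Ordinal.{u}} (h : x < o) : tin (ten o x h) = x := by
  have h' : x < @type o.ToType (· < ·) isWellOrder_lt := by rw [type_toType]; exact h
  have := @typein_enum o.ToType (· < ·) isWellOrder_lt x h'
  exact this

theorem tin_lt_tin {o : Ordinal.{u}} {b c : o.ToType} : tin b < tin c ↔ b < c :=
  @typein_lt_typein o.ToType (· < ·) isWellOrder_lt _ _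

theorem tin_le_tin {o : Ordinal.{u}} {b c : o.ToType} : tin b ≤ tin c ↔ b ≤ c := by
  rw [← not_lt (a := c) (b := b), ← not_lt, not_iff_not]; exact tin_lt_tin

theorem card_tin_lt {c : Cardinal.{u}} (x : c.ord.ToType) : (tin x).card < c :=
  card_typein_toType_lt c x

/-- The big-sup lemma: a supremum of a family of ordinals below `c.ord`, indexed by a
(type-1) index of cardinality `< lift c`, stays below `c.ord`. -/
theorem bigsup {ι : Type 1} (f : ι → Ordinal.{0}) {c : Cardinal.{0}} (hc : c.IsRegular)
    (hι : #ι < Cardinal.lift.{1} c) (hf : ∀ x, f x < c.ord) : sSup (Set.range f) < c.ord := by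
  by_contra hcon
  have hub : ∀ x < c.ord, ∃ i, x < f i := by
    intro x hx
    by_contra hno
    push_neg at hno
    exact hcon ((csSup_le' (by rintro y ⟨i, rfl⟩; exact hno i)).trans_lt hx)
  set φ : ι → c.ord.ToType := fun i => ten c.ord (f i) (hf i) with hφ
  have hunb : IsCofinal (Set.range φ) := by
    intro b
    obtain ⟨i, hi⟩ := hub (tin b) (tin_lt b)
    refine ⟨φ i, Set.mem_range_self i, not_lt.1 fun hlt => ?_⟩
    have h2 := tin_lt_tin.2 hlt
    rw [hφ] at h2
    simp only [tin_ten] at h2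
    exact absurd (hi.trans h2) (lt_irrefl _)
  have hcle : c ≤ #(Set.range φ) := by
    have h1 := Order.cof_le hunb
    rw [cof_toType] at h1
    rwa [hc.cof_ord] at h1
  have h2 : Cardinal.lift.{1} #(Set.range φ) ≤ Cardinal.lift.{0} #ι := Cardinal.mk_range_le_lift
  rw [Cardinal.lift_uzero] at h2
  exact absurd ((Cardinal.lift_le.2 hcle).trans h2) (not_le.2 hι)

theorem sSup_le_ord {ι : Type 1} (f : ι → Ordinal.{0}) {c : Cardinal.{0}}
    (hf : ∀ x, f x < c.ord) : sSup (Set.range f) ≤ c.ord :=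
  csSup_le' (by rintro y ⟨i, rfl⟩; exact (hf i).le)

variable (a) in
/-- exceptional set: where `f` fails to be below `h`. -/
def Exc (f h : a → Ordinal.{0}) : Set a := { i | ¬ f i ≤ h i }

variable (a) in
/-- The pcf ideal `J_{<λ}`. -/
def Jlt (lam : Cardinal.{1}) : Set (Set a) :=
  { b | ∀ D : Ultrafilter a, b ∈ D → cofUlt a D < lam }

theorem Jlt_subset {lam : Cardinal.{1}} {b b' : Set a} (hb : b ∈ Jlt a lam) (h : b' ⊆ b) :
    b' ∈ Jlt a lam := fun D hD => hb D (D.toFilter.mem_of_superset hD h)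

theorem Jlt_union {lam : Cardinal.{1}} {b b' : Set a} (hb : b ∈ Jlt a lam) (hb' : b' ∈ Jlt a lam) :
    b ∪ b' ∈ Jlt a lam := by
  intro D hD
  rcases (D.union_mem_iff).1 hD with h | h
  · exact hb D h
  · exact hb' D h

theorem Jlt_empty (lam : Cardinal.{1}) : (∅ : Set a) ∈ Jlt a lam :=
  fun D hD => absurd hD (by simp [Filter.empty_notMem])

theorem not_mem_of_Jlt {lam : Cardinal.{1}} {b : Set a} (hb : b ∈ Jlt a lam)
    {D : Ultrafilter a} (hD : lam ≤ cofUlt a D) : b ∉ D :=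
  fun h => absurd (hb D h) (not_lt.2 hD)

theorem exists_ultrafilter_of_not_Jlt {lam : Cardinal.{1}} {b : Set a} (hb : b ∉ Jlt a lam) :
    ∃ D : Ultrafilter a, b ∈ D ∧ lam ≤ cofUlt a D := by
  simp only [Jlt, Set.mem_setOf_eq, not_forall, not_lt] at hb
  obtain ⟨D, hD, h⟩ := hb
  exact ⟨D, hD, h⟩

theorem Exc_trans {f g h : a → Ordinal.{0}} :
    Exc a f h ⊆ Exc a f g ∪ Exc a g h := by
  intro i hi
  by_contra hno
  simp only [Exc, Set.mem_union, Set.mem_setOf_eq, not_or, not_not] at hno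
  exact hi (hno.1.trans hno.2)

theorem Jlt_trans {lam : Cardinal.{1}} {f g h : a → Ordinal.{0}}
    (h1 : Exc a f g ∈ Jlt a lam) (h2 : Exc a g h ∈ Jlt a lam) : Exc a f h ∈ Jlt a lam :=
  Jlt_subset (Jlt_union h1 h2) Exc_trans

/-- The defining set for `cofUlt`. -/
theorem cofUlt_covset_nonempty (D : Ultrafilter a) :
    { c : Cardinal.{1} | ∃ S : Set (a → Ordinal.{0}), S ⊆ ProdChoice a ∧ #S = c ∧
      ∀ g ∈ ProdChoice a, ∃ f ∈ S, { i | g i ≤ f i } ∈ D }.Nonempty := by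
  refine ⟨#(ProdChoice a), ProdChoice a, le_refl _, rfl, fun g hg => ⟨g, hg, ?_⟩⟩
  have : { i : a | g i ≤ g i } = Set.univ := by ext i; simp
  rw [this]
  exact Filter.univ_mem

theorem cofUlt_le {D : Ultrafilter a} {S : Set (a → Ordinal.{0})} (hS : S ⊆ ProdChoice a)
    (hcov : ∀ g ∈ ProdChoice a, ∃ f ∈ S, { i | g i ≤ f i } ∈ D) : cofUlt a D ≤ #S :=
  csInf_le' ⟨S, hS, rfl, hcov⟩

theorem cofUlt_attained (D : Ultrafilter a) :
    ∃ S : Set (a → Ordinal.{0}), S ⊆ ProdChoice a ∧ #S = cofUlt a D ∧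
      ∀ g ∈ ProdChoice a, ∃ f ∈ S, { i | g i ≤ f i } ∈ D :=
  csInf_mem (cofUlt_covset_nonempty D)

/-- The escape lemma: if the cofinality of `∏ a / D` is at least `lam`, then any family of
fewer than `lam` choice functions is strictly dominated mod `D` by a single choice function. -/
theorem escape {lam : Cardinal.{1}} {D : Ultrafilter a} (hD : lam ≤ cofUlt a D)
    {P : Set (a → Ordinal.{0})} (hP : P ⊆ ProdChoice a) (hcard : #P < lam) :
    ∃ G ∈ ProdChoice a, ∀ f ∈ P, { i | f i < G i } ∈ D := by
  by_contra hno
  push_neg at hno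
  have hcov : ∀ g ∈ ProdChoice a, ∃ f ∈ P, { i | g i ≤ f i } ∈ D := by
    intro g hg
    obtain ⟨f, hf, hfD⟩ := hno g hg
    refine ⟨f, hf, ?_⟩
    have : { i : a | g i ≤ f i } = { i : a | f i < g i }ᶜ := by
      ext i; simp [not_lt]
    rw [this]
    exact (Ultrafilter.compl_mem_iff_notMem).2 hfD
  exact absurd ((cofUlt_le hP hcov).trans_lt hcard) (not_lt.2 hD)

/-! ### choice-function lemmas -/

theorem creg (hreg : ∀ lam ∈ a, Cardinal.IsRegular lam) (i : a) :
    Cardinal.IsRegular (i : Cardinal.{0}) := hreg i i.2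

theorem ord_pos (hreg : ∀ lam ∈ a, Cardinal.IsRegular lam) (i : a) : 0 < (i : Cardinal.{0}).ord :=
  lt_of_lt_of_le (by simp [Cardinal.ord_aleph0])
    (Cardinal.ord_le_ord.2 (creg hreg i).aleph0_le)

theorem ord_limit (hreg : ∀ lam ∈ a, Cardinal.IsRegular lam) (i : a) :
    Order.IsSuccLimit ((i : Cardinal.{0}).ord) :=
  Cardinal.isSuccLimit_ord (creg hreg i).aleph0_le

theorem zero_mem (hreg : ∀ lam ∈ a, Cardinal.IsRegular lam) :
    (fun _ => 0 : a → Ordinal.{0}) ∈ ProdChoice a :=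
  fun i => ord_pos hreg i

theorem max_mem {f g : a → Ordinal.{0}} (hf : f ∈ ProdChoice a) (hg : g ∈ ProdChoice a) :
    (fun i => max (f i) (g i)) ∈ ProdChoice a :=
  fun i => max_lt (hf i) (hg i)

theorem succ_mem (hreg : ∀ lam ∈ a, Cardinal.IsRegular lam) {f : a → Ordinal.{0}}
    (hf : f ∈ ProdChoice a) : (fun i => f i + 1) ∈ ProdChoice a :=
  fun i => (ord_limit hreg i).add_one_lt (hf i)

theorem lift_gt (hgt : ∀ lam ∈ a, #a < Cardinal.lift.{1} lam) (i : a) :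
    #a < Cardinal.lift.{1} (i : Cardinal.{0}) := hgt i i.2

/-- Pointwise supremum of a small family of choice functions is a choice function. -/
theorem sup_mem (hreg : ∀ lam ∈ a, Cardinal.IsRegular lam)
    (hgt : ∀ lam ∈ a, #a < Cardinal.lift.{1} lam) {ι : Type 1} (hι : #ι ≤ #a)
    {F : ι → (a → Ordinal.{0})} (hF : ∀ x, F x ∈ ProdChoice a) :
    (fun i => sSup (Set.range fun x => F x i) : a → Ordinal.{0}) ∈ ProdChoice a := by
  intro i
  exact bigsup _ (creg hreg i) (hι.trans_lt (lift_gt hgt i)) (fun x => hF x i)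

theorem le_sup {ι : Type 1} {F : ι → (a → Ordinal.{0})} (hF : ∀ x, F x ∈ ProdChoice a)
    (x : ι) (i : a) : F x i ≤ sSup (Set.range fun x => F x i) :=
  le_csSup ⟨(i : Cardinal.{0}).ord, by rintro y ⟨z, rfl⟩; exact (hF z i).le⟩ ⟨x, rfl⟩

/-- Low case of directedness: a family of size at most `#a` has a pointwise bound. -/
theorem bound_low (hreg : ∀ lam ∈ a, Cardinal.IsRegular lam)
    (hgt : ∀ lam ∈ a, #a < Cardinal.lift.{1} lam)
    {F : Set (a → Ordinal.{0})} (hFP : F ⊆ ProdChoice a) (hcard : #F ≤ #a) :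
    ∃ h ∈ ProdChoice a, ∀ f ∈ F, ∀ i, f i ≤ h i := by
  refine ⟨fun i => sSup (Set.range fun f : F => (f : a → Ordinal.{0}) i),
    sup_mem hreg hgt hcard (fun f => hFP f.2), fun f hf i => ?_⟩
  exact le_sup (fun g : F => hFP g.2) ⟨f, hf⟩ i

/-! ### the successor case of directedness -/

theorem exists_surj {F : Set (a → Ordinal.{0})} (hne : F.Nonempty) {κ : Cardinal.{1}}
    (hcard : #F ≤ κ) : ∃ σ : κ.ord.ToType → F, Function.Surjective σ := by
  have h1 : #F ≤ #(κ.ord.ToType) := by rw [mk_ord_toType]; exact hcard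
  obtain ⟨emb⟩ := (Cardinal.le_def _ _).1 h1
  classical
  refine ⟨fun t => if h : ∃ s : F, emb s = t then h.choose else ⟨hne.choose, hne.choose_spec⟩,
    fun s => ⟨emb s, ?_⟩⟩
  have h : ∃ s' : F, emb s' = emb s := ⟨s, rfl⟩
  simp only [dif_pos h]
  exact emb.injective h.choose_spec

theorem bound_succ (hreg : ∀ lam ∈ a, Cardinal.IsRegular lam)
    (hgt : ∀ lam ∈ a, #a < Cardinal.lift.{1} lam) (hA : ℵ₀ ≤ #a) {lam : Cardinal.{1}}
    (hlam : Order.succ #a < lam) {F : Set (a → Ordinal.{0})} (hFP : F ⊆ ProdChoice a)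
    (hcard : #F ≤ Order.succ #a) :
    ∃ h ∈ ProdChoice a, ∀ f ∈ F, Exc a f h ∈ Jlt a lam := by
  classical
  rcases F.eq_empty_or_nonempty with rfl | hne
  · exact ⟨_, zero_mem hreg, by simp⟩
  set κ : Cardinal.{1} := Order.succ #a with hκ
  have hκreg : κ.IsRegular := Cardinal.isRegular_succ hA
  obtain ⟨σ, hσ⟩ := exists_surj hne hcard
  set h : κ.ord.ToType → a → Ordinal.{0} :=
    fun β i => sSup (Set.range fun δ : (Set.Iic β) => (σ δ.1 : a → Ordinal.{0}) i) with hh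
  have hIic : ∀ β : κ.ord.ToType, #(Set.Iic β) ≤ #a := by
    intro β
    have h1 : (Set.Iic β) = Set.Iio β ∪ {β} := (Set.Iio_union_right).symm
    have h2 : #(Set.Iic β) ≤ #(Set.Iio β) + 1 := by
      rw [h1]
      exact (Cardinal.mk_union_le _ _).trans (by simp)
    have h3 : #(Set.Iio β) ≤ #a := by
      exact Order.lt_succ_iff.1 (mk_Iio_ord_toType β)
    calc #(Set.Iic β) ≤ #(Set.Iio β) + 1 := h2
      _ ≤ #a + 1 := by exact add_le_add_left h3 1
      _ = #a := Cardinal.add_one_eq hA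
  have hmemh : ∀ β, h β ∈ ProdChoice a :=
    fun β => sup_mem hreg hgt (hIic β) (fun δ => hFP (σ δ.1).2)
  set s : a → Ordinal.{0} := fun i => sSup (Set.range fun β : κ.ord.ToType => h β i) with hs
  set Z : Set a := {i : a | ¬ s i < (i : Cardinal.{0}).ord} with hZ
  set H : a → Ordinal.{0} := fun i => if s i < (i : Cardinal.{0}).ord then s i else 0 with hH
  have hHP : H ∈ ProdChoice a := by
    intro i
    rw [hH]
    dsimp only
    split
    · assumption
    · exact ord_pos hreg i
  have hexc : ∀ f ∈ F, Exc a f H ⊆ Z := by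
    intro f hf i hi
    by_contra hiZ
    rw [hZ, Set.mem_setOf_eq, not_not] at hiZ
    apply hi
    obtain ⟨β, hβ⟩ := hσ ⟨f, hf⟩
    have hfi : f i ≤ h β i := by
      have : (σ β : a → Ordinal.{0}) i ≤ h β i :=
        le_sup (F := fun δ : (Set.Iic β) => (σ δ.1 : a → Ordinal.{0}))
          (fun δ => hFP (σ δ.1).2) ⟨β, le_refl β⟩ i
      rwa [hβ] at this
    have hhs : h β i ≤ s i := le_sup (F := h) hmemh β i
    have : H i = s i := if_pos hiZ
    rw [this]
    exact hfi.trans hhs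
  have hZJ : Z ∈ Jlt a lam := by
    intro D hZD
    have hlifteq : ∀ i ∈ Z, Cardinal.lift.{1} (i : Cardinal.{0}) = κ := by
      intro i hiZ
      have h1 : ¬ (#(κ.ord.ToType) < Cardinal.lift.{1} (i : Cardinal.{0})) := by
        intro hc
        exact hiZ (bigsup (fun β => h β i) (creg hreg i) hc (fun β => hmemh β i))
      rw [mk_ord_toType, not_lt] at h1
      exact le_antisymm h1 (Order.succ_le_of_lt (lift_gt hgt i))
    set cfn : κ.ord.ToType → a → Ordinal.{0} := fun γ i =>
      if hx : tin γ < Ordinal.lift.{1} ((i : Cardinal.{0}).ord)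
      then (Set.mem_range.1 (Ordinal.mem_range_lift_of_le hx.le)).choose else 0 with hcfn
    have hcfnP : ∀ γ, cfn γ ∈ ProdChoice a := by
      intro γ i
      rw [hcfn]
      dsimp only
      split
      · next hx =>
        have hspec := (Set.mem_range.1 (Ordinal.mem_range_lift_of_le hx.le)).choose_spec
        rw [← Ordinal.lift_lt (a := (Set.mem_range.1 (Ordinal.mem_range_lift_of_le hx.le)).choose), hspec]
        exact hx
      · exact ord_pos hreg i
    have hliftord : ∀ i ∈ Z, Ordinal.lift.{1} ((i : Cardinal.{0}).ord) = κ.ord := by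
      intro i hiZ
      rw [lift_ord, hlifteq i hiZ]
    have hcov : ∀ g ∈ ProdChoice a, ∃ f ∈ Set.range cfn, {i | g i ≤ f i} ∈ D := by
      intro g hg
      have hbd : ∀ p : Z, Ordinal.lift.{1} (g p.1) < κ.ord := by
        intro p
        rw [← hliftord p.1 p.2]
        exact Ordinal.lift_lt.2 (hg p.1)
      have hx : (⨆ p : Z, Ordinal.lift.{1} (g p.1)) < κ.ord :=
        iSup_lt_ord_of_isRegular hκreg ((Cardinal.mk_subtype_le _).trans_lt (Order.lt_succ _)) hbd
      refine ⟨cfn (ten κ.ord _ hx), Set.mem_range_self _, ?_⟩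
      refine D.toFilter.mem_of_superset hZD ?_
      intro i hiZ
      have htg : tin (ten κ.ord _ hx) = ⨆ p : Z, Ordinal.lift.{1} (g p.1) := tin_ten hx
      have hcond : tin (ten κ.ord _ hx) < Ordinal.lift.{1} ((i : Cardinal.{0}).ord) := by
        rw [htg, hliftord i hiZ]
        exact hx
      have hchoose := (Set.mem_range.1 (Ordinal.mem_range_lift_of_le hcond.le)).choose_spec
      show g i ≤ cfn (ten κ.ord _ hx) i
      rw [hcfn]
      dsimp only
      rw [dif_pos hcond]
      rw [← Ordinal.lift_le (b := (Set.mem_range.1 (Ordinal.mem_range_lift_of_le hcond.le)).choose), hchoose, htg]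
      exact le_ciSup ⟨κ.ord, by rintro y ⟨p, rfl⟩; exact (hbd p).le⟩ (⟨i, hiZ⟩ : Z)
    have hsize : #(Set.range cfn) ≤ κ := by
      have := Cardinal.mk_range_le (f := cfn)
      rwa [mk_ord_toType] at this
    exact (cofUlt_le (by rintro y ⟨γ, rfl⟩; exact hcfnP γ) hcov).trans_lt (hsize.trans_lt hlam)
  exact ⟨H, hHP, fun f hf => Jlt_subset hZJ (hexc f hf)⟩

/-! ### bounding increasing sequences of big regular length -/

theorem bound_seq (hreg : ∀ lam ∈ a, Cardinal.IsRegular lam)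
    (hgt : ∀ lam ∈ a, #a < Cardinal.lift.{1} lam) (hA : ℵ₀ ≤ #a) {lam μ : Cardinal.{1}}
    (hμreg : μ.IsRegular) (hμA : Order.succ #a < μ) (hμlam : μ < lam)
    (g : μ.ord.ToType → a → Ordinal.{0}) (hgP : ∀ β, g β ∈ ProdChoice a)
    (hinc : ∀ δ β, δ < β → Exc a (g δ) (g β) ∈ Jlt a lam) :
    ∃ h ∈ ProdChoice a, ∀ β, Exc a (g β) h ∈ Jlt a lam := by
  classical
  by_contra hcon
  push_neg at hcon
  have hcon' : ∀ h, h ∈ ProdChoice a → ∃ β, Exc a (g β) h ∉ Jlt a lam := hcon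
  set P : Set (a → Ordinal.{0}) := Set.range g ∩ ProdChoice a with hP
  have hPsub : P ⊆ ProdChoice a := Set.inter_subset_right
  have hPcard : #P < lam := by
    have h1 : #P ≤ #(Set.range g) := Cardinal.mk_le_mk_of_subset Set.inter_subset_left
    have h2 : #(Set.range g) ≤ #(μ.ord.ToType) := Cardinal.mk_range_le
    rw [mk_ord_toType] at h2
    exact ((h1.trans h2).trans_lt hμlam)
  have key : ∀ h, h ∈ ProdChoice a → ∃ (β : μ.ord.ToType) (D : Ultrafilter a)
      (G : a → Ordinal.{0}), G ∈ ProdChoice a ∧ Exc a (g β) h ∈ D ∧ lam ≤ cofUlt a D ∧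
      ∀ β', {i | g β' i < G i} ∈ D := by
    intro h hh
    obtain ⟨β, hβ⟩ := hcon' h hh
    obtain ⟨D, hCD, hDcof⟩ := exists_ultrafilter_of_not_Jlt hβ
    obtain ⟨G, hGP, hGesc⟩ := escape hDcof hPsub hPcard
    exact ⟨β, D, G, hGP, hCD, hDcof, fun β' => hGesc (g β') ⟨Set.mem_range_self β', hgP β'⟩⟩
  choose bad Dse Gse hGseP hCD hDcof hGesc using key
  set stp : (a → Ordinal.{0}) → a → Ordinal.{0} := fun h i =>
    max (h i) (if hh : h ∈ ProdChoice a then Gse h hh i else 0) with hstp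
  have hstpP : ∀ h (hh : h ∈ ProdChoice a), stp h ∈ ProdChoice a := by
    intro h hh
    have := max_mem hh (hGseP h hh)
    intro i
    have h2 := this i
    rw [hstp]
    dsimp only
    rw [dif_pos hh]
    exact h2
  have hstple : ∀ h i, h i ≤ stp h i := fun h i => le_max_left _ _
  have hstpG : ∀ h (hh : h ∈ ProdChoice a) i, Gse h hh i ≤ stp h i := by
    intro h hh i
    rw [hstp]
    dsimp only
    rw [dif_pos hh]
    exact le_max_right _ _
  set κ : Cardinal.{1} := Order.succ #a with hκ
  have wf : WellFounded ((· < ·) : κ.ord.ToType → κ.ord.ToType → Prop) :=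
    (wellFoundedLT_toType κ.ord).wf
  set H : κ.ord.ToType → a → Ordinal.{0} := wf.fix
    (fun ξ rec i => sSup (Set.range (fun ζp : Set.Iio ξ => stp (rec ζp.1 ζp.2) i))) with hHdef0
  have hHeq : ∀ ξ, H ξ = fun i => sSup (Set.range (fun ζp : Set.Iio ξ => stp (H ζp.1) i)) := by
    intro ξ
    rw [hHdef0]
    rw [WellFounded.fix_eq]
  have hHP : ∀ ξ, H ξ ∈ ProdChoice a := by
    intro ξ
    induction ξ using wf.induction with
    | _ ξ IH =>
      rw [hHeq ξ]
      have hsize : #(Set.Iio ξ) ≤ #a := Order.lt_succ_iff.1 (mk_Iio_ord_toType ξ)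
      exact sup_mem hreg hgt hsize (fun ζp => hstpP _ (IH ζp.1 ζp.2))
  have hstep : ∀ ζ ξ, ζ < ξ → ∀ i, stp (H ζ) i ≤ H ξ i := by
    intro ζ ξ hζξ i
    have := le_sup (F := fun ζp : Set.Iio ξ => stp (H ζp.1))
      (fun ζp => hstpP _ (hHP ζp.1)) ⟨ζ, hζξ⟩ i
    rw [hHeq ξ]
    exact this
  set αf : κ.ord.ToType → μ.ord.ToType := fun ξ => bad (H ξ) (hHP ξ) with hαf
  have hx : (⨆ ξ : κ.ord.ToType, tin (αf ξ)) < μ.ord := by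
    refine iSup_lt_ord_of_isRegular hμreg ?_ (fun ξ => tin_lt _)
    rw [mk_ord_toType]
    exact hμA
  set αstar : μ.ord.ToType := ten μ.ord _ hx with hαstar
  have hle : ∀ ξ, αf ξ ≤ αstar := by
    intro ξ
    rw [← tin_le_tin, hαstar, tin_ten]
    exact le_ciSup ⟨μ.ord, by rintro y ⟨ξ', rfl⟩; exact (tin_lt _).le⟩ ξ
  set E : κ.ord.ToType → Set a := fun ξ =>
    Exc a (g (αf ξ)) (H ξ) ∩ {i | g (αf ξ) i ≤ g αstar i} ∩
      {i | g αstar i < Gse (H ξ) (hHP ξ) i} with hE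
  have hED : ∀ ξ, E ξ ∈ Dse (H ξ) (hHP ξ) := by
    intro ξ
    refine Filter.inter_mem (Filter.inter_mem (hCD _ _) ?_) (hGesc _ _ αstar)
    rcases lt_or_eq_of_le (hle ξ) with hlt | heq
    · have hJ : Exc a (g (αf ξ)) (g αstar) ∈ Jlt a lam := hinc _ _ hlt
      have hnot : Exc a (g (αf ξ)) (g αstar) ∉ Dse (H ξ) (hHP ξ) :=
        not_mem_of_Jlt hJ (hDcof _ _)
      have : {i | g (αf ξ) i ≤ g αstar i} = (Exc a (g (αf ξ)) (g αstar))ᶜ := by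
        ext i; simp [Exc]
      rw [this]
      exact (Ultrafilter.compl_mem_iff_notMem).2 hnot
    · have : {i | g (αf ξ) i ≤ g αstar i} = Set.univ := by
        ext i; simp [heq]
      rw [this]
      exact Filter.univ_mem
  have hEne : ∀ ξ, (E ξ).Nonempty := fun ξ => Ultrafilter.nonempty_of_mem (hED ξ)
  set pick : κ.ord.ToType → a := fun ξ => (hEne ξ).choose with hpick
  have hpickE : ∀ ξ, pick ξ ∈ E ξ := fun ξ => (hEne ξ).choose_spec
  have hne : ∀ ζ ξ, ζ < ξ → pick ζ ≠ pick ξ := by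
    intro ζ ξ hζξ hceq
    obtain ⟨⟨h1ζ, h2ζ⟩, h3ζ⟩ := hpickE ζ
    obtain ⟨⟨h1ξ, h2ξ⟩, _⟩ := hpickE ξ
    have hlt1 : g αstar (pick ζ) < H ξ (pick ζ) :=
      lt_of_lt_of_le h3ζ ((hstpG (H ζ) (hHP ζ) (pick ζ)).trans (hstep ζ ξ hζξ (pick ζ)))
    have hlt2 : H ξ (pick ξ) < g αstar (pick ξ) :=
      lt_of_lt_of_le (not_le.1 h1ξ) h2ξ
    rw [hceq] at hlt1
    exact absurd (hlt1.trans hlt2) (lt_irrefl _)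
  have hinj : Function.Injective pick := by
    intro ζ ξ heq
    by_contra hneq
    rcases lt_or_gt_of_ne hneq with h | h
    · exact hne _ _ h heq
    · exact hne _ _ h heq.symm
  have : κ ≤ #a := by
    have := Cardinal.mk_le_of_injective hinj
    rwa [mk_ord_toType] at this
  exact absurd this (not_le.2 (Order.lt_succ _))

/-! ### the directedness theorem -/

theorem directed (hreg : ∀ lam ∈ a, Cardinal.IsRegular lam)
    (hgt : ∀ lam ∈ a, #a < Cardinal.lift.{1} lam) (hA : ℵ₀ ≤ #a) {lam : Cardinal.{1}}
    {F : Set (a → Ordinal.{0})} (hFP : F ⊆ ProdChoice a) (hcard : #F < lam) :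
    ∃ h ∈ ProdChoice a, ∀ f ∈ F, Exc a f h ∈ Jlt a lam := by
  classical
  have main : ∀ μ : Cardinal.{1}, ∀ F : Set (a → Ordinal.{0}), F ⊆ ProdChoice a → #F = μ →
      μ < lam → ∃ h ∈ ProdChoice a, ∀ f ∈ F, Exc a f h ∈ Jlt a lam := by
    intro μ
    induction μ using Cardinal.lt_wf.induction with
    | _ μ IH =>
      intro F hFP hFμ hμlam
      by_cases hlow : #F ≤ #a
      · obtain ⟨h, hh, hdom⟩ := bound_low hreg hgt hFP hlow
        refine ⟨h, hh, fun f hf => ?_⟩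
        have : Exc a f h = ∅ := by
          ext i; simp only [Exc, Set.mem_setOf_eq, Set.mem_empty_iff_false, iff_false, not_not]
          exact hdom f hf i
        rw [this]
        exact Jlt_empty lam
      · have hAltF : #a < #F := not_le.1 hlow
        have hsuccle : Order.succ #a ≤ #F := Order.succ_le_of_lt hAltF
        by_cases hsucc : #F ≤ Order.succ #a
        · exact bound_succ hreg hgt hA (lt_of_le_of_lt hsuccle (hFμ ▸ hμlam)) hFP hsucc
        · have hsA : Order.succ #a < μ := hFμ ▸ (not_le.1 hsucc)
          have hμinf : ℵ₀ ≤ μ := ((hA.trans (Order.le_succ _)).trans hsA.le)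
          have hEq : #(μ.ord.ToType) = #F := by rw [mk_ord_toType, hFμ]
          obtain ⟨e⟩ := Cardinal.eq.1 hEq
          set wf2 : WellFounded ((· < ·) : μ.ord.ToType → μ.ord.ToType → Prop) :=
            (wellFoundedLT_toType μ.ord).wf with hwf2
          have hbnd : ∀ (β : μ.ord.ToType) (recv : ∀ δ, δ < β → (a → Ordinal.{0})),
              ∃ h ∈ ProdChoice a, ∀ f ∈ insert ((e β : a → Ordinal.{0}))
                ((Set.range fun δp : Set.Iio β => recv δp.1 δp.2) ∩ ProdChoice a),
                Exc a f h ∈ Jlt a lam := by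
            intro β recv
            set S := insert ((e β : a → Ordinal.{0}))
              ((Set.range fun δp : Set.Iio β => recv δp.1 δp.2) ∩ ProdChoice a) with hS
            have hsub : S ⊆ ProdChoice a := by
              rw [hS]
              intro f hf
              rcases Set.mem_insert_iff.1 hf with rfl | hf'
              · exact hFP (e β).2
              · exact hf'.2
            have hcards : #S < μ := by
              have h1 : #S ≤ #((Set.range fun δp : Set.Iio β => recv δp.1 δp.2) ∩
                  ProdChoice a : Set (a → Ordinal.{0})) + 1 := Cardinal.mk_insert_le
              have h2 : #((Set.range fun δp : Set.Iio β => recv δp.1 δp.2) ∩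
                  ProdChoice a : Set (a → Ordinal.{0})) ≤
                  #(Set.range fun δp : Set.Iio β => recv δp.1 δp.2) :=
                Cardinal.mk_le_mk_of_subset Set.inter_subset_left
              have h3 : #(Set.range fun δp : Set.Iio β => recv δp.1 δp.2) ≤ #(Set.Iio β) :=
                Cardinal.mk_range_le
              have h4 : #(Set.Iio β) < μ := mk_Iio_ord_toType β
              exact lt_of_le_of_lt (h1.trans (add_le_add_left (h2.trans h3) 1))
                (Cardinal.add_lt_of_lt hμinf h4 (lt_of_lt_of_le one_lt_aleph0 hμinf))
            exact IH #S hcards S hsub rfl (hcards.trans hμlam)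
          choose bnd hbndP hbndJ using hbnd
          set g : μ.ord.ToType → a → Ordinal.{0} := wf2.fix (fun β rec => bnd β rec) with hgdef
          have hgeq : ∀ β, g β = bnd β (fun δ _ => g δ) := by
            intro β
            rw [hgdef]
            rw [WellFounded.fix_eq]
          have hgP : ∀ β, g β ∈ ProdChoice a := by
            intro β
            rw [hgeq β]
            exact hbndP β _
          have hgdom : ∀ β, Exc a (e β : a → Ordinal.{0}) (g β) ∈ Jlt a lam := by
            intro β
            rw [hgeq β]
            exact hbndJ β _ _ (Set.mem_insert _ _)
          have hginc : ∀ δ β, δ < β → Exc a (g δ) (g β) ∈ Jlt a lam := by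
            intro δ β hδβ
            rw [hgeq β]
            exact hbndJ β _ (g δ) (Set.mem_insert_of_mem _ ⟨⟨⟨δ, hδβ⟩, rfl⟩, hgP δ⟩)
          have hfin : ∀ (h : a → Ordinal.{0}), (∀ β, Exc a (g β) h ∈ Jlt a lam) →
              ∀ f ∈ F, Exc a f h ∈ Jlt a lam := by
            intro h hball f hf
            have h1 := hgdom (e.symm ⟨f, hf⟩)
            rw [Equiv.apply_symm_apply] at h1
            exact Jlt_trans h1 (hball _)
          by_cases hregμ : μ.IsRegular
          · obtain ⟨h, hh, hbd⟩ := bound_seq hreg hgt hA hregμ hsA hμlam g hgP hginc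
            exact ⟨h, hh, hfin h hbd⟩
          · have hν : μ.ord.cof < μ := not_le.1 (fun hcle => hregμ ⟨hμinf, hcle⟩)
            obtain ⟨U, hUunb, hUcard⟩ := Order.exists_cof_eq (α := μ.ord.ToType)
            have hUcard' : #U = μ.ord.cof := by
              rw [hUcard, cof_toType]
            set F2 : Set (a → Ordinal.{0}) := Set.range (fun u : U => g u.1) with hF2
            have hF2sub : F2 ⊆ ProdChoice a := by
              rintro f ⟨u, rfl⟩
              exact hgP u.1
            have hF2card : #F2 < μ := by
              have := Cardinal.mk_range_le (f := fun u : U => g u.1)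
              rw [hUcard'] at this
              exact this.trans_lt hν
            obtain ⟨h, hh, hbd⟩ := IH #F2 hF2card F2 hF2sub rfl (hF2card.trans hμlam)
            refine ⟨h, hh, hfin h ?_⟩
            intro β
            obtain ⟨u, hu, hnot⟩ := hUunb β
            have hβu : β ≤ u := hnot
            have hend : Exc a (g u) h ∈ Jlt a lam := hbd _ ⟨⟨u, hu⟩, rfl⟩
            rcases lt_or_eq_of_le hβu with hlt | heq
            · exact Jlt_trans (hginc β u hlt) hend
            · rw [heq]
              exact hend
  exact main #F F hFP rfl hcard

/-- If `D` avoids the ideal `J_{<lam}` then the cofinality of `∏ a / D` is at least `lam`. -/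
theorem cof_ge_of_avoid (hreg : ∀ lam ∈ a, Cardinal.IsRegular lam)
    (hgt : ∀ lam ∈ a, #a < Cardinal.lift.{1} lam) (hA : ℵ₀ ≤ #a) {lam : Cardinal.{1}}
    {D : Ultrafilter a} (hav : ∀ b ∈ Jlt a lam, b ∉ D) : lam ≤ cofUlt a D := by
  by_contra hlt
  push_neg at hlt
  obtain ⟨S, hSsub, hScard, hScov⟩ := cofUlt_attained D
  obtain ⟨h, hh, hbd⟩ := directed hreg hgt hA hSsub (hScard.symm ▸ hlt : #S < lam)
  obtain ⟨f, hfS, hfD⟩ := hScov _ (succ_mem hreg hh)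
  have hsub2 : {i : a | h i + 1 ≤ f i} ⊆ Exc a f h := by
    intro i hi
    simp only [Set.mem_setOf_eq] at hi
    simp only [Exc, Set.mem_setOf_eq, not_le]
    rw [Ordinal.add_one_eq_succ, Order.succ_le_iff] at hi
    exact hi
  exact hav _ (Jlt_subset (hbd f hfS) hsub2) hfD

/-! ### assembling the main theorem, infinite case -/

theorem cofUlt_le_pi (D : Ultrafilter a) : cofUlt a D ≤ #(ProdChoice a) := by
  refine cofUlt_le (le_refl _) (fun g hg => ⟨g, hg, ?_⟩)
  have : { i : a | g i ≤ g i } = Set.univ := by ext i; simp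
  rw [this]
  exact Filter.univ_mem

theorem Jlt_mono {lam lam' : Cardinal.{1}} (h : lam ≤ lam') : Jlt a lam ⊆ Jlt a lam' :=
  fun _ hb D hD => lt_of_lt_of_le (hb D hD) h

theorem small_pi (hgt : ∀ lam ∈ a, #a < Cardinal.lift.{1} lam) (hne : Nonempty a) :
    ∃ c₀ : Cardinal.{0}, #(ProdChoice a) ≤ Cardinal.lift.{1} c₀ := by
  obtain ⟨i₀⟩ := hne
  obtain ⟨α₀, hα₀⟩ := Cardinal.mem_range_lift_of_le (lift_gt hgt i₀).le
  have hsm : Small.{0} a := by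
    have h1 : #a = #(ULift.{1,0} α₀.out) := by
      rw [Cardinal.mk_uLift, Cardinal.mk_out, hα₀]
    obtain ⟨e⟩ := Cardinal.eq.1 h1
    exact small_of_injective (f := fun x => (e x).down) (fun x y hxy => by
      apply e.injective
      exact ULift.ext _ _ hxy)
  have hbdd : BddAbove a := Cardinal.bddAbove_iff_small.2 hsm
  set Λ : Cardinal.{0} := sSup a with hΛ
  have hΛle : ∀ i : a, (i : Cardinal.{0}) ≤ Λ := fun i => le_csSup hbdd i.2
  set c₁ : Cardinal.{0} := Order.succ Λ with hc₁
  have hord : ∀ (f : a → Ordinal.{0}), f ∈ ProdChoice a → ∀ i, f i < c₁.ord := by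
    intro f hf i
    exact lt_of_lt_of_le (hf i) (Cardinal.ord_le_ord.2 ((hΛle i).trans (Order.le_succ _)))
  set φ : ↥(ProdChoice a) → (a → c₁.ord.ToType) :=
    fun f i => ten c₁.ord (f.1 i) (hord f.1 f.2 i) with hφ
  have hinj : Function.Injective φ := by
    intro f g hfg
    apply Subtype.ext
    funext i
    have := congrFun hfg i
    have h2 := congrArg tin this
    rwa [hφ, tin_ten, tin_ten] at h2
  have h3 : #(ProdChoice a) ≤ #(a → c₁.ord.ToType) := Cardinal.mk_le_of_injective hinj
  have h4 : #(a → c₁.ord.ToType) = Cardinal.lift.{1} (c₁ ^ α₀) := by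
    rw [Cardinal.mk_arrow, mk_ord_toType, Cardinal.lift_uzero, ← hα₀, Cardinal.lift_power]
  exact ⟨c₁ ^ α₀, h4 ▸ h3⟩

theorem max_of_infinite (hreg : ∀ lam ∈ a, Cardinal.IsRegular lam)
    (hgt : ∀ lam ∈ a, #a < Cardinal.lift.{1} lam) (hA : ℵ₀ ≤ #a) :
    ∃ θ : Cardinal.{0}, IsGreatest (pcf a) θ := by
  classical
  have hane : Nonempty a :=
    Cardinal.mk_ne_zero_iff.1 (fun h => Cardinal.aleph0_ne_zero (le_zero_iff.1 (h ▸ hA)))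
  obtain ⟨c₀, hc₀⟩ := small_pi hgt hane
  set T : Set Cardinal.{1} := {lam | ∀ D : Ultrafilter a, cofUlt a D < lam} with hT
  have hTne : T.Nonempty :=
    ⟨Order.succ #(ProdChoice a), fun D => (cofUlt_le_pi D).trans_lt (Order.lt_succ _)⟩
  set lamstar : Cardinal.{1} := sInf T with hls
  have hmem : ∀ D : Ultrafilter a, cofUlt a D < lamstar := csInf_mem hTne
  have hmin : ∀ c, c < lamstar → ∃ D : Ultrafilter a, c ≤ cofUlt a D := by
    intro c hc
    by_contra hno
    push_neg at hno
    exact absurd (csInf_le' (show c ∈ T from hno)) (not_le.2 hc)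
  by_cases hcase : ∃ ν < lamstar, ∀ c < lamstar, c ≤ ν
  · obtain ⟨ν, hν, hmax⟩ := hcase
    obtain ⟨D, hD⟩ := hmin ν hν
    have heq : cofUlt a D = ν := le_antisymm (hmax _ (hmem D)) hD
    obtain ⟨θ, hθ⟩ := Cardinal.mem_range_lift_of_le (heq ▸ ((cofUlt_le_pi D).trans hc₀) : ν ≤ Cardinal.lift.{1} c₀)
    refine ⟨θ, ⟨D, heq.trans hθ.symm⟩, ?_⟩
    rintro θ' ⟨D', hD'⟩
    have : Cardinal.lift.{1} θ' ≤ Cardinal.lift.{1} θ := by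
      rw [hθ, ← hD']
      exact hmax _ (hmem D')
    exact Cardinal.lift_le.1 this
  · push_neg at hcase
    set Jstar : Set (Set a) := {b | ∃ lam' < lamstar, b ∈ Jlt a lam'} with hJstar
    have hJproper : (Set.univ : Set a) ∉ Jstar := by
      rintro ⟨lam', hlt', hall⟩
      have : lam' ∈ T := fun D => hall D Filter.univ_mem
      exact absurd (csInf_le' this) (not_le.2 hlt')
    have hzero : (0 : Cardinal.{1}) < lamstar := by
      obtain ⟨i₀⟩ := hane
      exact lt_of_le_of_lt zero_le (hmem (pure i₀))
    set F0 : Filter a :=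
      { sets := {s | sᶜ ∈ Jstar}
        univ_sets := by
          show (Set.univ : Set a)ᶜ ∈ Jstar
          rw [Set.compl_univ]
          exact ⟨0, hzero, Jlt_empty 0⟩
        sets_of_superset := by
          intro s t hs hst
          obtain ⟨lam', hlt', hmem'⟩ := hs
          exact ⟨lam', hlt', Jlt_subset hmem' (Set.compl_subset_compl.2 hst)⟩
        inter_sets := by
          intro s t hs ht
          obtain ⟨lam1, hlt1, hmem1⟩ := hs
          obtain ⟨lam2, hlt2, hmem2⟩ := ht
          refine ⟨max lam1 lam2, max_lt hlt1 hlt2, ?_⟩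
          rw [Set.compl_inter]
          exact Jlt_union (Jlt_mono (le_max_left _ _) hmem1)
            (Jlt_mono (le_max_right _ _) hmem2) } with hF0
    have hF0ne : F0.NeBot := ⟨fun hbot => hJproper (by
      have hemp : (∅ : Set a) ∈ F0 := Filter.empty_mem_iff_bot.2 hbot
      have h2 : (∅ : Set a)ᶜ ∈ Jstar := hemp
      rwa [Set.compl_empty] at h2)⟩
    obtain ⟨D, hDle⟩ := Ultrafilter.exists_le F0
    have havoid : ∀ lam', lam' < lamstar → ∀ b ∈ Jlt a lam', b ∉ D := by
      intro lam' hlt' b hb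
      have hbc : bᶜ ∈ F0 := by
        show bᶜᶜ ∈ Jstar
        rw [compl_compl]
        exact ⟨lam', hlt', hb⟩
      exact (Ultrafilter.compl_mem_iff_notMem).1 (hDle hbc)
    have hge : ∀ lam', lam' < lamstar → lam' ≤ cofUlt a D :=
      fun lam' h => cof_ge_of_avoid hreg hgt hA (havoid lam' h)
    obtain ⟨c, hc, hνc⟩ := hcase _ (hmem D)
    exact absurd (hge c hc) (not_le.2 hνc)

/-! ### the finite case -/

theorem cofUlt_pure (hreg : ∀ lam ∈ a, Cardinal.IsRegular lam) (i₀ : a) :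
    cofUlt a (pure i₀ : Ultrafilter a) = Cardinal.lift.{1} (i₀ : Cardinal.{0}) := by
  classical
  refine le_antisymm ?_ ?_
  · set cpure : (i₀ : Cardinal.{0}).ord.ToType → a → Ordinal.{0} :=
      fun γ i => if i = i₀ then tin γ else 0 with hcpure
    have hcP : ∀ γ, cpure γ ∈ ProdChoice a := by
      intro γ i
      rw [hcpure]
      dsimp only
      split
      · next h => rw [h]; exact tin_lt γ
      · exact ord_pos hreg i
    have hcov : ∀ g ∈ ProdChoice a, ∃ f ∈ Set.range cpure,
        {i | g i ≤ f i} ∈ (pure i₀ : Ultrafilter a) := by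
      intro g hg
      refine ⟨cpure (ten _ (g i₀) (hg i₀)), Set.mem_range_self _, ?_⟩
      rw [Ultrafilter.mem_pure]
      show g i₀ ≤ cpure (ten _ (g i₀) (hg i₀)) i₀
      rw [hcpure]
      dsimp only
      rw [if_pos rfl, tin_ten]
    have hle := cofUlt_le (by rintro y ⟨γ, rfl⟩; exact hcP γ) hcov
    refine hle.trans ?_
    have h1 : Cardinal.lift.{0} #(Set.range cpure) ≤
        Cardinal.lift.{1} #((i₀ : Cardinal.{0}).ord.ToType) := Cardinal.mk_range_le_lift
    rw [Cardinal.lift_uzero, mk_ord_toType] at h1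
    exact h1
  · by_contra hlt
    push_neg at hlt
    obtain ⟨S, hSsub, hScard, hScov⟩ := cofUlt_attained (pure i₀ : Ultrafilter a)
    have hxlt : sSup (Set.range fun f : S => (f : a → Ordinal.{0}) i₀) < (i₀ : Cardinal.{0}).ord :=
      bigsup _ (creg hreg i₀) (hScard.symm ▸ hlt) (fun f => hSsub f.2 i₀)
    set x := sSup (Set.range fun f : S => (f : a → Ordinal.{0}) i₀) with hx
    set g : a → Ordinal.{0} := fun i => if i = i₀ then x + 1 else 0 with hg
    have hgP : g ∈ ProdChoice a := by
      intro i
      rw [hg]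
      dsimp only
      split
      · next h => rw [h]; exact (ord_limit hreg i₀).add_one_lt hxlt
      · exact ord_pos hreg i
    obtain ⟨f, hfS, hfD⟩ := hScov g hgP
    rw [Ultrafilter.mem_pure] at hfD
    have h1 : g i₀ ≤ f i₀ := hfD
    rw [hg] at h1
    dsimp only at h1
    rw [if_pos rfl] at h1
    have h2 : f i₀ ≤ x :=
      le_csSup ⟨(i₀ : Cardinal.{0}).ord, by rintro y ⟨z, rfl⟩; exact (hSsub z.2 i₀).le⟩
        ⟨⟨f, hfS⟩, rfl⟩
    have h3 : x < x := lt_of_lt_of_le (lt_of_lt_of_le (Order.lt_succ x) (by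
      rw [Ordinal.add_one_eq_succ])) (h1.trans h2)
    exact absurd h3 (lt_irrefl x)

theorem max_of_finite (hreg : ∀ lam ∈ a, Cardinal.IsRegular lam) (hfin : #a < ℵ₀)
    (hne : a.Nonempty) : ∃ θ : Cardinal.{0}, IsGreatest (pcf a) θ := by
  classical
  haveI : Finite a := Cardinal.lt_aleph0_iff_finite.1 hfin
  have hsub : ∀ θ ∈ pcf a, θ ∈ a := by
    rintro θ ⟨D, hD⟩
    obtain ⟨x, -, hDpure⟩ := Ultrafilter.eq_pure_of_finite_mem Set.finite_univ Filter.univ_mem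
      (f := D)
    rw [hDpure, cofUlt_pure hreg x] at hD
    have : (x : Cardinal.{0}) = θ := Cardinal.lift_injective hD
    rw [← this]
    exact x.2
  have hmemp : ∀ i : a, (i : Cardinal.{0}) ∈ pcf a := fun i => ⟨pure i, cofUlt_pure hreg i⟩
  obtain ⟨x, hxa, hxmax⟩ := Set.Finite.exists_maximalFor id a (Set.toFinite a) hne
  refine ⟨x, hmemp ⟨x, hxa⟩, ?_⟩
  intro θ' hθ'
  have hθa := hsub θ' hθ'
  rcases le_total θ' x with h | h
  · exact h
  · exact hxmax hθa h

end PCFAux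

/-- For a nonempty set `a` of regular cardinals each greater than `|a|`, `pcf a` has a
largest element. -/
theorem stmt5 (a : Set Cardinal.{0}) (hne : a.Nonempty)
    (hreg : ∀ lam ∈ a, Cardinal.IsRegular lam)
    (hgt : ∀ lam ∈ a, #a < Cardinal.lift.{1} lam) :
    ∃ θ, IsGreatest (pcf a) θ := by
  rcases lt_or_ge (#a) ℵ₀ with hfin | hA
  · exact PCFAux.max_of_finite hreg hfin hne
  · exact PCFAux.max_of_infinite hreg hgt hA
end
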